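/- For j ≥ 1 and p ≥ 1, let V_{j,p} ⊆ V^{⊗n} be the span of basis elements v_𝐢 with c_p(𝐢) ≥ j. If v_𝐢 ∈ V_{j,p} then T_p⁻¹ ⋯ T_{n−1}⁻¹ S_{n−1} ⋯ S_p (v_𝐢) ∈ v_𝐢 + V_{j+1, p}. -/

import Mathlib

namespace SSW

/-- Tuples indexing basis vectors of the `n`-fold tensor power of a space with
basis indexed by `Fin N`. -/
abbrev Tup (N n : ℕ) := Fin n → Fin N

/-- The `n`-fold tensor power `V^{⊗ n}` of the superspace `V` with homogeneous basis
`v_1, …, v_N`, realised as the free `K`-module on the set of index tuples. -/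
abbrev Ten (K : Type*) [Semiring K] (N n : ℕ) : Type _ := Tup N n →₀ K

/-- The basis vector `v_𝐢 = v_{i_1} ⊗ ⋯ ⊗ v_{i_n}`. -/
noncomputable def bv (K : Type*) [Semiring K] {N n : ℕ} (i : Tup N n) : Ten K N n :=
  Finsupp.single i 1

/-- The position (0-indexed) of the `a`-th tensor factor (1-indexed), clamped. -/
def fpos (n : ℕ) (hn : 0 < n) (a : ℕ) : Fin n := ⟨min (a - 1) (n - 1), by omega⟩

/-- The `a`-th entry (1-indexed) `i_a` of a tuple `𝐢`. -/
def ent {N n : ℕ} (hn : 0 < n) (i : Tup N n) (a : ℕ) : Fin N := i (fpos n hn a)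

/-- The tuple `𝐢 s_a`, with entries `i_a` and `i_{a+1}` interchanged. -/
def swapT {N n : ℕ} (hn : 0 < n) (a : ℕ) (i : Tup N n) : Tup N n :=
  i ∘ Equiv.swap (fpos n hn a) (fpos n hn (a + 1))

/-- `(-1)^x` for a parity `x ∈ ℤ/2`. -/
def sgn (K : Type*) [Ring K] (x : ZMod 2) : K := if x = 1 then -1 else 1

/-- The parity function of `ℂ^{k|ℓ}`: `ī = 0` for `i ≤ k`, `ī = 1` for `i > k`. -/
def hookPar (k l : ℕ) : Fin (k + l) → ZMod 2 := fun i => if (i : ℕ) < k then 0 else 1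

/-- The sign permutation operator `s_a` on `V^{⊗n}` (paper convention: `1 ≤ a ≤ n-1`). -/
noncomputable def sOp (K : Type*) [Field K] {N n : ℕ} (hn : 0 < n)
    (par : Fin N → ZMod 2) (a : ℕ) : Module.End K (Ten K N n) :=
  Finsupp.lift (Ten K N n) K (Tup N n) fun i =>
    if ent hn i a = ent hn i (a + 1) then
      sgn K (par (ent hn i a)) • bv K i
    else
      sgn K (par (ent hn i a) * par (ent hn i (a + 1))) • bv K (swapT hn a i)

/-- The super Hecke operator `T_a` on `V^{⊗n}` (paper convention: `1 ≤ a ≤ n-1`). -/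
noncomputable def TOp (K : Type*) [Field K] (q : K) {N n : ℕ} (hn : 0 < n)
    (par : Fin N → ZMod 2) (a : ℕ) : Module.End K (Ten K N n) :=
  Finsupp.lift (Ten K N n) K (Tup N n) fun i =>
    if ent hn i a < ent hn i (a + 1) then
      (q - q⁻¹) • bv K i +
        sgn K (par (ent hn i a) * par (ent hn i (a + 1))) • bv K (swapT hn a i)
    else if ent hn i a = ent hn i (a + 1) then
      (((q - q⁻¹) + sgn K (par (ent hn i a)) * (q + q⁻¹)) / 2) • bv K i
    else
      sgn K (par (ent hn i a) * par (ent hn i (a + 1))) • bv K (swapT hn a i)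

/-- The inverse `T_a⁻¹ = T_a - (q - q⁻¹)` of the Hecke operator `T_a`. -/
noncomputable def Tinv (K : Type*) [Field K] (q : K) {N n : ℕ} (hn : 0 < n)
    (par : Fin N → ZMod 2) (a : ℕ) : Module.End K (Ten K N n) :=
  TOp K q hn par a - (q - q⁻¹) • 1

/-- The operator `S_a`: acts as `T_a` when the colors of the `a`-th and `(a+1)`-th
factors agree, and as the signed swap `s_a` otherwise. -/
noncomputable def SOp (K : Type*) [Field K] (q : K) {N n m : ℕ} (hn : 0 < n)
    (par : Fin N → ZMod 2) (col : Fin N → Fin m) (a : ℕ) : Module.End K (Ten K N n) :=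
  Finsupp.lift (Ten K N n) K (Tup N n) fun i =>
    if col (ent hn i a) = col (ent hn i (a + 1)) then TOp K q hn par a (bv K i)
    else sOp K hn par a (bv K i)

/-- The inverse `S_a⁻¹` of `S_a`. -/
noncomputable def Sinv (K : Type*) [Field K] (q : K) {N n m : ℕ} (hn : 0 < n)
    (par : Fin N → ZMod 2) (col : Fin N → Fin m) (a : ℕ) : Module.End K (Ten K N n) :=
  Finsupp.lift (Ten K N n) K (Tup N n) fun i =>
    if col (ent hn i a) = col (ent hn i (a + 1)) then Tinv K q hn par a (bv K i)
    else sOp K hn par a (bv K i)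

/-- The operator `S_0 : v_𝐢 ↦ Q_{c_1(𝐢)} v_𝐢`. -/
noncomputable def S0op (K : Type*) [Field K] {N n m : ℕ} (hn : 0 < n)
    (col : Fin N → Fin m) (Q : Fin m → K) : Module.End K (Ten K N n) :=
  Finsupp.lift (Ten K N n) K (Tup N n) fun i => Q (col (ent hn i 1)) • bv K i

/-- `θ = S_{n-1} ⋯ S_1`. -/
noncomputable def thetaOp (K : Type*) [Field K] (q : K) {N n m : ℕ} (hn : 0 < n)
    (par : Fin N → ZMod 2) (col : Fin N → Fin m) : Module.End K (Ten K N n) :=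
  (((List.range (n - 1)).reverse).map fun t => SOp K q hn par col (t + 1)).prod

/-- `T_0 = T_1⁻¹ ⋯ T_{n-1}⁻¹ θ S_0`. -/
noncomputable def T0op (K : Type*) [Field K] (q : K) {N n m : ℕ} (hn : 0 < n)
    (par : Fin N → ZMod 2) (col : Fin N → Fin m) (Q : Fin m → K) :
    Module.End K (Ten K N n) :=
  (((List.range (n - 1)).map fun t => Tinv K q hn par (t + 1)).prod) *
    thetaOp K q hn par col * S0op K hn col Q


/-- The subspace `V_{j,p}` of `V^{⊗n}`, spanned by the basis elements `v_𝐢`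
with `c_p(𝐢) ≥ j` (colors are numbered `1, …, m`). -/
noncomputable def Vjp (K : Type*) [Field K] {N n m : ℕ} (hn : 0 < n)
    (col : Fin N → Fin m) (j p : ℕ) : Submodule K (Ten K N n) :=
  Submodule.span K {v | ∃ i : Tup N n, j ≤ (col (ent hn i p) : ℕ) + 1 ∧ v = bv K i}
section Helpers

variable {K : Type*} [Field K] {N n m : ℕ}

lemma lift_bv (f : Tup N n → Ten K N n) (i : Tup N n) :
    Finsupp.lift (Ten K N n) K (Tup N n) f (bv K i) = f i := by
  rw [bv, Finsupp.lift_apply, Finsupp.sum_single_index] <;> simp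

variable (hn : 0 < n)

lemma fpos_coe {a : ℕ} (ha1 : 1 ≤ a) (han : a ≤ n) : (fpos n hn a : ℕ) = a - 1 := by
  simp only [fpos]; omega

lemma fpos_ne {a : ℕ} (ha1 : 1 ≤ a) (han : a < n) : fpos n hn a ≠ fpos n hn (a + 1) := by
  apply Fin.ne_of_val_ne
  rw [fpos_coe hn ha1 (le_of_lt han), fpos_coe hn (by omega) han]
  omega

lemma ent_swap_left {a : ℕ} (i : Tup N n) :
    ent hn (swapT hn a i) a = ent hn i (a + 1) := by
  simp [ent, swapT, Equiv.swap_apply_left]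

lemma ent_swap_right {a : ℕ} (i : Tup N n) :
    ent hn (swapT hn a i) (a + 1) = ent hn i a := by
  simp [ent, swapT, Equiv.swap_apply_right]

lemma swapT_invol {a : ℕ} (i : Tup N n) : swapT hn a (swapT hn a i) = i := by
  funext x
  simp [swapT, Equiv.swap_apply_self]

lemma sgn_sq (x : ZMod 2) : sgn K x * sgn K x = 1 := by
  unfold sgn; split <;> ring

end Helpers
section Ops
variable {K : Type*} [Field K] {N n m : ℕ} (hn : 0 < n) (q : K)
  (par : Fin N → ZMod 2) (col : Fin N → Fin m)

lemma TOp_bv (a : ℕ) (i : Tup N n) :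
    TOp K q hn par a (bv K i) =
      if ent hn i a < ent hn i (a + 1) then
        (q - q⁻¹) • bv K i +
          sgn K (par (ent hn i a) * par (ent hn i (a + 1))) • bv K (swapT hn a i)
      else if ent hn i a = ent hn i (a + 1) then
        (((q - q⁻¹) + sgn K (par (ent hn i a)) * (q + q⁻¹)) / 2) • bv K i
      else
        sgn K (par (ent hn i a) * par (ent hn i (a + 1))) • bv K (swapT hn a i) :=
  lift_bv _ i

lemma sOp_bv (a : ℕ) (i : Tup N n) :
    sOp K hn par a (bv K i) =
      if ent hn i a = ent hn i (a + 1) then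
        sgn K (par (ent hn i a)) • bv K i
      else
        sgn K (par (ent hn i a) * par (ent hn i (a + 1))) • bv K (swapT hn a i) :=
  lift_bv _ i

lemma SOp_bv (a : ℕ) (i : Tup N n) :
    SOp K q hn par col a (bv K i) =
      if col (ent hn i a) = col (ent hn i (a + 1)) then TOp K q hn par a (bv K i)
      else sOp K hn par a (bv K i) :=
  lift_bv _ i

lemma Tinv_apply (a : ℕ) (v : Ten K N n) :
    Tinv K q hn par a v = TOp K q hn par a v - (q - q⁻¹) • v := by
  simp [Tinv, LinearMap.sub_apply, LinearMap.smul_apply]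

end Ops
section Inv
variable {K : Type*} [Field K] {N n m : ℕ} (hn : 0 < n) (q : K)
  (par : Fin N → ZMod 2)

lemma sgn_cases (x : ZMod 2) : sgn K x = -1 ∨ sgn K x = 1 := by
  unfold sgn; split
  · exact Or.inl rfl
  · exact Or.inr rfl

lemma Tinv_TOp_bv [CharZero K] (hq : q ≠ 0) (a : ℕ) (i : Tup N n) :
    Tinv K q hn par a (TOp K q hn par a (bv K i)) = bv K i := by
  have e1 : ent hn (swapT hn a i) a = ent hn i (a+1) := ent_swap_left hn i
  have e2 : ent hn (swapT hn a i) (a+1) = ent hn i a := ent_swap_right hn i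
  set a' := ent hn i a with ha'
  set b' := ent hn i (a+1) with hb'
  set σ := sgn K (par a' * par b') with hσd
  have hσσ : σ * σ = 1 := sgn_sq _
  have hswap : sgn K (par b' * par a') = σ := by rw [hσd, mul_comm]
  rcases lt_trichotomy a' b' with h | h | h
  · rw [TOp_bv, if_pos h, map_add, map_smul, map_smul, Tinv_apply, Tinv_apply,
      TOp_bv, if_pos h, TOp_bv, e1, e2, if_neg (not_lt.2 h.le), if_neg h.ne',
      swapT_invol, hswap]
    simp only [smul_add, smul_sub, smul_smul, hσσ, one_smul]
    simp only [← ha', ← hb', ← hσd]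
    linear_combination (norm := module) hσσ • bv K i
  · rw [TOp_bv, if_neg (not_lt.2 h.ge), if_pos h, map_smul,
      Tinv_apply, TOp_bv, if_neg (not_lt.2 h.ge), if_pos h]
    rw [smul_sub, smul_smul, smul_smul, ← sub_smul]
    have key : (q - q⁻¹ + sgn K (par a') * (q + q⁻¹)) / 2 *
        ((q - q⁻¹ + sgn K (par a') * (q + q⁻¹)) / 2) -
        (q - q⁻¹ + sgn K (par a') * (q + q⁻¹)) / 2 * (q - q⁻¹) = 1 := by
      rcases sgn_cases (K := K) (par a') with hs | hs <;> rw [hs] <;> field_simp <;> ring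
    rw [key, one_smul]
  · rw [TOp_bv, if_neg (not_lt.2 h.le), if_neg h.ne', map_smul, Tinv_apply,
      TOp_bv, e1, e2, if_pos h, hswap, swapT_invol]
    simp only [smul_add, smul_sub, smul_smul, hσσ, one_smul]
    simp only [← ha', ← hb', ← hσd]
    linear_combination (norm := module) hσσ • bv K i

end Inv
section Vlem
variable {K : Type*} [Field K] {N n m : ℕ} (hn : 0 < n) (q : K)
  (par : Fin N → ZMod 2) (col : Fin N → Fin m)

lemma mem_Vjp {j p : ℕ} {i : Tup N n} (h : j ≤ (col (ent hn i p) : ℕ) + 1) :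
    bv K i ∈ Vjp K hn col j p :=
  Submodule.subset_span ⟨i, h, rfl⟩

lemma Vjp_eq (j p : ℕ) :
    Vjp K hn col j p =
      Finsupp.supported K K {i : Tup N n | j ≤ (col (ent hn i p) : ℕ) + 1} := by
  rw [Finsupp.supported_eq_span_single, Vjp]
  congr 1
  ext v
  constructor
  · rintro ⟨i, h1, rfl⟩; exact ⟨i, h1, rfl⟩
  · rintro ⟨i, h1, rfl⟩; exact ⟨i, h1, rfl⟩

lemma of_mem_Vjp {j p : ℕ} {i : Tup N n} (h : bv K i ∈ Vjp K hn col j p) :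
    j ≤ (col (ent hn i p) : ℕ) + 1 := by
  rw [Vjp_eq, Finsupp.mem_supported] at h
  have hs : i ∈ (bv K i : Ten K N n).support := by
    simp [bv]
  exact h hs

lemma Vjp_oper (L : Module.End K (Ten K N n)) {j p : ℕ} {W : Submodule K (Ten K N n)}
    (hL : ∀ k : Tup N n, j ≤ (col (ent hn k p) : ℕ) + 1 → L (bv K k) ∈ W)
    {v : Ten K N n} (hv : v ∈ Vjp K hn col j p) : L v ∈ W := by
  have h : Vjp K hn col j p ≤ W.comap L :=
    Submodule.span_le.2 (by rintro _ ⟨k, hk, rfl⟩; exact hL k hk)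
  exact h hv

/-- Lemma A: `T_p⁻¹` maps `V_{j',p+1}` into `V_{j',p}`. -/
lemma Tinv_maps (hcol : Monotone col) {j' p : ℕ} {v : Ten K N n}
    (hv : v ∈ Vjp K hn col j' (p + 1)) :
    Tinv K q hn par p v ∈ Vjp K hn col j' p := by
  refine Vjp_oper hn col _ ?_ hv
  intro k hk
  have e1 : ent hn (swapT hn p k) p = ent hn k (p+1) := ent_swap_left hn k
  rw [Tinv_apply, TOp_bv]
  split_ifs with h1 h2
  · rw [add_sub_cancel_left]
    exact Submodule.smul_mem _ _ (mem_Vjp hn col (by rw [e1]; exact hk))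
  · rw [← sub_smul]
    exact Submodule.smul_mem _ _ (mem_Vjp hn col (by rw [h2]; exact hk))
  · refine Submodule.sub_mem _ ?_ ?_
    · exact Submodule.smul_mem _ _ (mem_Vjp hn col (by rw [e1]; exact hk))
    · have hle : ent hn k (p+1) ≤ ent hn k p := le_of_not_gt (fun h => h1 h)
      exact Submodule.smul_mem _ _
        (mem_Vjp hn col (le_trans hk (by simpa using hcol hle)))

/-- `S_p` maps qualifying basis vectors into `V_{j,p+1}`. -/
lemma SOp_mem {j p : ℕ} {i : Tup N n}
    (hjc : j ≤ (col (ent hn i p) : ℕ) + 1) :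
    SOp K q hn par col p (bv K i) ∈ Vjp K hn col j (p + 1) := by
  have e2 : ent hn (swapT hn p i) (p+1) = ent hn i p := ent_swap_right hn i
  rw [SOp_bv]
  split_ifs with hc
  · rw [TOp_bv]
    have hci : j ≤ (col (ent hn i (p+1)) : ℕ) + 1 := by rw [← hc]; exact hjc
    split_ifs with h1 h2
    · exact Submodule.add_mem _
        (Submodule.smul_mem _ _ (mem_Vjp hn col hci))
        (Submodule.smul_mem _ _ (mem_Vjp hn col (by rw [e2]; exact hjc)))
    · exact Submodule.smul_mem _ _ (mem_Vjp hn col hci)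
    · exact Submodule.smul_mem _ _ (mem_Vjp hn col (by rw [e2]; exact hjc))
  · have hne : ent hn i p ≠ ent hn i (p+1) := fun h => hc (congrArg col h)
    rw [sOp_bv, if_neg hne]
    exact Submodule.smul_mem _ _ (mem_Vjp hn col (by rw [e2]; exact hjc))

end Vlem
section Step
variable {K : Type*} [Field K] {N n m : ℕ} (hn : 0 < n) (q : K)
  (par : Fin N → ZMod 2) (col : Fin N → Fin m)

/-- The key one-step computation: `T_p⁻¹ S_p (v_i) ≡ v_i mod V_{j+1,p}`. -/
lemma Tinv_SOp [CharZero K] (hq : q ≠ 0) (hcol : Monotone col) {j p : ℕ}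
    {i : Tup N n} (hjc : j ≤ (col (ent hn i p) : ℕ) + 1) :
    Tinv K q hn par p (SOp K q hn par col p (bv K i)) - bv K i ∈
      Vjp K hn col (j + 1) p := by
  rw [SOp_bv]
  split_ifs with hc
  · rw [Tinv_TOp_bv hn q par hq p i, sub_self]
    exact Submodule.zero_mem _
  · have hne : ent hn i p ≠ ent hn i (p+1) := fun h => hc (congrArg col h)
    have e1 : ent hn (swapT hn p i) p = ent hn i (p+1) := ent_swap_left hn i
    have e2 : ent hn (swapT hn p i) (p+1) = ent hn i p := ent_swap_right hn i
    set a' := ent hn i p with ha'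
    set b' := ent hn i (p+1) with hb'
    set σ := sgn K (par a' * par b') with hσd
    have hσσ : σ * σ = 1 := sgn_sq _
    have hswap : sgn K (par b' * par a') = σ := by rw [hσd, mul_comm]
    rw [sOp_bv, if_neg hne, map_smul, Tinv_apply, TOp_bv, e1, e2]
    rcases hne.lt_or_gt with h | h
    · -- i_p < i_{p+1}
      rw [if_neg (not_lt.2 h.le), if_neg h.ne', hswap, swapT_invol]
      have hcalc : σ • (σ • bv K i - (q - q⁻¹) • bv K (swapT hn p i)) - bv K i
          = (-(σ * (q - q⁻¹))) • bv K (swapT hn p i) := by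
        simp only [smul_sub, smul_smul, hσσ, one_smul, neg_smul]
        abel
      rw [hcalc]
      refine Submodule.smul_mem _ _ (mem_Vjp hn col ?_)
      have hcolle : col a' < col b' := lt_of_le_of_ne (hcol h.le) hc
      rw [e1]
      omega
    · -- i_p > i_{p+1}
      rw [if_pos h, hswap, swapT_invol]
      have hcalc : σ • ((q - q⁻¹) • bv K (swapT hn p i) + σ • bv K i
            - (q - q⁻¹) • bv K (swapT hn p i)) - bv K i = 0 := by
        simp only [smul_sub, smul_add, smul_smul, hσσ, one_smul]
        abel
      rw [hcalc]
      exact Submodule.zero_mem _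

end Step
lemma map_range_shift {α : Type*} (f : ℕ → α) (d p : ℕ) :
    (List.range (d+1)).map (fun t => f (p + t)) =
      f p :: (List.range d).map (fun t => f ((p+1) + t)) := by
  rw [List.range_succ_eq_map, List.map_cons, List.map_map]
  have h : ((fun t => f (p + t)) ∘ Nat.succ) = fun t => f ((p+1) + t) := by
    funext t; simp only [Function.comp_apply]; congr 1; omega
  rw [h]
  norm_num

section Main
variable {K : Type*} [Field K] {N n m : ℕ} (hn : 0 < n) (q : K)
  (par : Fin N → ZMod 2) (col : Fin N → Fin m)

lemma aux8 [CharZero K] (hq : q ≠ 0) (hcol : Monotone col) :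
    ∀ d p : ℕ, p + d = n → 1 ≤ p → ∀ j : ℕ, ∀ i : Tup N n,
      j ≤ (col (ent hn i p) : ℕ) + 1 →
      ((((List.range (n - p)).map fun t => Tinv K q hn par (p + t)).prod *
          (((List.range (n - p)).reverse).map fun t => SOp K q hn par col (p + t)).prod)
        (bv K i)) - bv K i ∈ Vjp K hn col (j + 1) p := by
  intro d
  induction d with
  | zero =>
    intro p hpd hp j i hjc
    have h0 : n - p = 0 := by omega
    rw [h0]
    simp only [List.range_zero, List.map_nil, List.reverse_nil, List.prod_nil, mul_one,
      Module.End.one_apply, sub_self]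
    exact Submodule.zero_mem _
  | succ d ih =>
    intro p hpd hp j i hjc
    have hd : n - p = d + 1 := by omega
    have hd1 : n - (p+1) = d := by omega
    have IH : ∀ k : Tup N n, j ≤ (col (ent hn k (p+1)) : ℕ) + 1 →
        ((((List.range d).map fun t => Tinv K q hn par ((p+1) + t)).prod *
            (((List.range d).reverse).map fun t => SOp K q hn par col ((p+1) + t)).prod)
          (bv K k)) - bv K k ∈ Vjp K hn col (j + 1) (p+1) := by
      intro k hk
      have := ih (p+1) (by omega) (by omega) j k hk
      rwa [hd1] at this
    rw [hd, map_range_shift (f := fun a => Tinv K q hn par a) d p, List.prod_cons,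
      List.map_reverse, map_range_shift (f := fun a => SOp K q hn par col a) d p,
      List.reverse_cons, List.prod_append, List.prod_singleton, ← List.map_reverse]
    set A := ((List.range d).map fun t => Tinv K q hn par ((p+1) + t)).prod with hA
    set B := (((List.range d).reverse).map fun t => SOp K q hn par col ((p+1) + t)).prod with hB
    set u := SOp K q hn par col p (bv K i) with hu
    have hkey : ((Tinv K q hn par p * A) * (B * SOp K q hn par col p)) (bv K i)
        = Tinv K q hn par p ((A * B) u) := by
      simp only [Module.End.mul_apply, hu]
    rw [hkey]
    have humem : u ∈ Vjp K hn col j (p+1) := SOp_mem hn q par col hjc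
    have hYu : (A * B) u - u ∈ Vjp K hn col (j+1) (p+1) := by
      have h2 : ((A * B) - 1) u ∈ Vjp K hn col (j+1) (p+1) := by
        refine Vjp_oper hn col _ ?_ humem
        intro k hk
        rw [LinearMap.sub_apply, Module.End.one_apply]
        exact IH k hk
      rwa [LinearMap.sub_apply, Module.End.one_apply] at h2
    have hsplit : Tinv K q hn par p ((A * B) u) - bv K i =
        (Tinv K q hn par p u - bv K i) + Tinv K q hn par p ((A * B) u - u) := by
      rw [map_sub]
      abel
    rw [hsplit]
    exact Submodule.add_mem _ (Tinv_SOp hn q par col hq hcol hjc)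
      (Tinv_maps hn q par col hcol hYu)

end Main

/-- if `v_𝐢 ∈ V_{j,p}` then
`T_p⁻¹ ⋯ T_{n−1}⁻¹ S_{n−1} ⋯ S_p (v_𝐢) ∈ v_𝐢 + V_{j+1,p}`. -/
theorem stmt8 (K : Type*) [Field K] [CharZero K] (q : K) (hq : q ≠ 0)
    {N n m : ℕ} (hn : 0 < n) (par : Fin N → ZMod 2)
    (col : Fin N → Fin m) (hcol : Monotone col)
    (j p : ℕ) (hj : 1 ≤ j) (hp : 1 ≤ p) (hpn : p < n) (i : Tup N n)
    (hi : bv K i ∈ Vjp K hn col j p) :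
    ((((List.range (n - p)).map fun t => Tinv K q hn par (p + t)).prod *
        (((List.range (n - p)).reverse).map fun t => SOp K q hn par col (p + t)).prod)
      (bv K i)) - bv K i ∈ Vjp K hn col (j + 1) p := by
  have hjc : j ≤ (col (ent hn i p) : ℕ) + 1 := of_mem_Vjp hn col hi
  exact aux8 hn q par col hq hcol (n - p) p (by omega) hp j i hjc

end SSW
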